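/- Let φ be a state on ℓ∞(κ). Equip κ with the ⊤ measurable space structure (every subset is measurable), and let μ be a measure on κ such that for every I ⊆ κ, μ(I) equals ν_φ(I) (in particular μ is a probability measure). Then for every f ∈ ℓ∞(κ), φ(f) = ∫ f dμ, the Bochner integral of f : κ → ℂ with respect to μ. -/

import Mathlib

open scoped ENNReal
open Filter

/-- The indicator function of `I` as an element of `ℓ∞(κ)`. -/
noncomputable def chi {κ : Type*} (I : Set κ) : lp (fun _ : κ => ℂ) ∞ :=
  ⟨I.indicator (fun _ => (1 : ℂ)), memℓp_infty ⟨1, by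
    rintro x ⟨i, rfl⟩
    by_cases h : i ∈ I <;> simp [Set.indicator, h]⟩⟩

/-- A state on `ℓ∞(κ)`: a continuous linear functional with `φ 1 = 1` that takes
nonnegative real values on functions with nonnegative real values. -/
structure IsState {κ : Type*} (φ : lp (fun _ : κ => ℂ) ∞ →L[ℂ] ℂ) : Prop where
  map_one : φ 1 = 1
  nonneg : ∀ f : lp (fun _ : κ => ℂ) ∞,
    (∀ i, ∃ r : ℝ, 0 ≤ r ∧ f i = r) → ∃ r : ℝ, 0 ≤ r ∧ φ f = r

lemma chi_apply {κ : Type*} (I : Set κ) (i : κ) :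
    (chi I) i = I.indicator (fun _ => (1 : ℂ)) i := rfl

lemma floor_mul_close {ε x : ℝ} (hε : 0 < ε) : |x - ε * ⌊x / ε⌋| ≤ ε := by
  have h1 : (⌊x / ε⌋ : ℝ) ≤ x / ε := Int.floor_le _
  have h2 : x / ε < ⌊x / ε⌋ + 1 := Int.lt_floor_add_one _
  have h1' : (⌊x / ε⌋ : ℝ) * ε ≤ x := (le_div_iff₀ hε).mp h1
  have h2' : x < ((⌊x / ε⌋ : ℝ) + 1) * ε := (div_lt_iff₀ hε).mp h2
  rw [abs_le]
  constructor <;> nlinarith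

theorem stmt_7 {κ : Type*} [Infinite κ] [m : MeasurableSpace κ] (hm : m = ⊤)
    (φ : lp (fun _ : κ => ℂ) ∞ →L[ℂ] ℂ) (hφ : IsState φ)
    (μ : MeasureTheory.Measure κ)
    (hμ : ∀ I : Set κ, φ (chi I) = ((μ I).toReal : ℂ)) :
    ∀ f : lp (fun _ : κ => ℂ) ∞, φ f = ∫ i, f i ∂μ := by
  have hms : ∀ s : Set κ, MeasurableSet s := fun s => by
    rw [hm]; exact MeasurableSpace.measurableSet_top
  have hmeasf : ∀ f : lp (fun _ : κ => ℂ) ∞, Measurable (fun i => f i) :=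
    fun f t _ => hms _
  -- μ is a probability measure
  have hone : chi (Set.univ : Set κ) = (1 : lp (fun _ : κ => ℂ) ∞) := by
    apply lp.ext
    rw [lp.infty_coeFn_one]
    funext i
    simp [chi_apply]
  have huniv : μ Set.univ = 1 := by
    have h := hμ Set.univ
    rw [hone, hφ.map_one] at h
    have h2 : (μ Set.univ).toReal = 1 := by exact_mod_cast h.symm
    exact (ENNReal.toReal_eq_one_iff _).mp h2
  haveI : MeasureTheory.IsProbabilityMeasure μ := ⟨huniv⟩
  intro f
  -- every element of ℓ∞ is integrable
  have hint : ∀ g : lp (fun _ : κ => ℂ) ∞, MeasureTheory.Integrable (fun i => g i) μ := by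
    intro g
    refine MeasureTheory.Integrable.mono' (MeasureTheory.integrable_const ‖g‖)
      ((hmeasf g).aestronglyMeasurable) ?_
    filter_upwards with i
    exact lp.norm_apply_le_norm ENNReal.top_ne_zero g i
  have key : ∀ ε : ℝ, 0 < ε → ‖φ f - ∫ i, f i ∂μ‖ ≤ (‖φ‖ + 1) * (2 * ε) := by
    intro ε hε
    set c := ‖f‖ with hc
    set N : ℤ := ⌈c / ε⌉ + 1 with hN
    set F : Finset (ℤ × ℤ) := Finset.Icc (-N) N ×ˢ Finset.Icc (-N) N with hF
    set z : ℤ × ℤ → ℂ := fun p => ((ε * p.1 : ℝ) : ℂ) + ((ε * p.2 : ℝ) : ℂ) * Complex.I with hz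
    set P : κ → ℤ × ℤ := fun i => (⌊(f i).re / ε⌋, ⌊(f i).im / ε⌋) with hP
    set Ip : ℤ × ℤ → Set κ := fun p => {i | P i = p} with hIp
    set s : lp (fun _ : κ => ℂ) ∞ := ∑ p ∈ F, z p • chi (Ip p) with hs
    have hcN : ∀ x : ℝ, |x| ≤ c → ⌊x / ε⌋ ∈ Finset.Icc (-N) N := by
      intro x hx
      rw [Finset.mem_Icc]
      obtain ⟨hxl, hxr⟩ := abs_le.mp hx
      have hx1 : x / ε ≤ c / ε := by
        exact (div_le_div_iff_of_pos_right hε).mpr hxr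
      have hx2 : -(c / ε) ≤ x / ε := by
        rw [← neg_div]
        exact (div_le_div_iff_of_pos_right hε).mpr hxl
      constructor
      · rw [Int.le_floor, hN]
        have hceil : c / ε ≤ (⌈c / ε⌉ : ℝ) := Int.le_ceil _
        push_cast
        linarith
      · calc ⌊x / ε⌋ ≤ ⌈x / ε⌉ := Int.floor_le_ceil _
          _ ≤ ⌈c / ε⌉ := Int.ceil_le_ceil hx1
          _ ≤ N := by omega
    have hPmem : ∀ i, P i ∈ F := by
      intro i
      rw [hF, Finset.mem_product]
      refine ⟨hcN _ ?_, hcN _ ?_⟩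
      · exact (Complex.abs_re_le_norm _).trans (lp.norm_apply_le_norm ENNReal.top_ne_zero f i)
      · exact (Complex.abs_im_le_norm _).trans (lp.norm_apply_le_norm ENNReal.top_ne_zero f i)
    have hcoe : ∀ i, s i = ∑ p ∈ F, z p • (Ip p).indicator (fun _ => (1:ℂ)) i := by
      intro i
      rw [hs, lp.coeFn_sum]
      simp only [Finset.sum_apply, lp.coeFn_smul, Pi.smul_apply, chi_apply]
    have hsapply : ∀ i, s i = z (P i) := by
      intro i
      rw [hcoe i]
      rw [Finset.sum_eq_single_of_mem (P i) (hPmem i)]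
      · simp [hIp, Set.indicator_of_mem, Set.mem_setOf_eq]
      · intro p hp hne
        rw [Set.indicator_of_notMem, smul_zero]
        simp only [hIp, Set.mem_setOf_eq]
        exact fun h => hne (h ▸ rfl)
    have hdiff : ∀ i, ‖f i - s i‖ ≤ 2 * ε := by
      intro i
      rw [hsapply i]
      have hre : (f i - z (P i)).re = (f i).re - ε * ⌊(f i).re / ε⌋ := by
        simp [hz, hP]
      have him : (f i - z (P i)).im = (f i).im - ε * ⌊(f i).im / ε⌋ := by
        simp [hz, hP]
      calc ‖f i - z (P i)‖ ≤ |(f i - z (P i)).re| + |(f i - z (P i)).im| :=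
            Complex.norm_le_abs_re_add_abs_im _
        _ ≤ ε + ε := by
            rw [hre, him]
            exact add_le_add (floor_mul_close hε) (floor_mul_close hε)
        _ = 2 * ε := by ring
    have hfs : ‖f - s‖ ≤ 2 * ε := by
      refine lp.norm_le_of_forall_le (by positivity) ?_
      intro i
      simpa [lp.coeFn_sub] using hdiff i
    have hφs : φ s = ∑ p ∈ F, z p * ((μ (Ip p)).toReal : ℂ) := by
      rw [hs, map_sum]
      refine Finset.sum_congr rfl fun p _ => ?_
      rw [map_smul, hμ (Ip p), smul_eq_mul]
    have hIs : ∫ i, s i ∂μ = ∑ p ∈ F, z p * ((μ (Ip p)).toReal : ℂ) := by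
      have : ∫ i, s i ∂μ
          = ∫ i, ∑ p ∈ F, z p • (Ip p).indicator (fun _ => (1:ℂ)) i ∂μ := by
        exact MeasureTheory.integral_congr_ae (Filter.Eventually.of_forall hcoe)
      rw [this, MeasureTheory.integral_finset_sum]
      · refine Finset.sum_congr rfl fun p _ => ?_
        rw [MeasureTheory.integral_smul, MeasureTheory.integral_indicator_const _ (hms _)]
        simp [smul_eq_mul, MeasureTheory.measureReal_def]
      · intro p _
        have h : MeasureTheory.Integrable ((Ip p).indicator (fun _ => (1:ℂ))) μ :=
          (MeasureTheory.integrable_const (1:ℂ)).indicator (hms _)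
        simpa [Pi.smul_def] using h.smul (z p)
    have hsub : ∫ i, (f - s) i ∂μ = (∫ i, f i ∂μ) - ∫ i, s i ∂μ := by
      have h1 : ∫ i, (f - s) i ∂μ = ∫ i, (f i - s i) ∂μ := by
        refine MeasureTheory.integral_congr_ae (Filter.Eventually.of_forall fun i => ?_)
        simp [lp.coeFn_sub]
      rw [h1, MeasureTheory.integral_sub (hint f) (hint s)]
    have heq : φ f - ∫ i, f i ∂μ = (φ (f - s) - ∫ i, (f - s) i ∂μ) := by
      rw [map_sub, hsub, hφs, hIs]
      ring
    rw [heq]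
    have hb1 : ‖φ (f - s)‖ ≤ ‖φ‖ * (2 * ε) :=
      (φ.le_opNorm _).trans (by
        exact mul_le_mul_of_nonneg_left hfs (norm_nonneg φ))
    have hb2 : ‖∫ i, (f - s) i ∂μ‖ ≤ 2 * ε := by
      have := MeasureTheory.norm_integral_le_of_norm_le_const (μ := μ)
        (f := fun i => (f - s) i) (C := 2 * ε)
        (Filter.Eventually.of_forall fun i => by
          simpa [lp.coeFn_sub] using hdiff i)
      simpa [huniv] using this
    calc ‖φ (f - s) - ∫ i, (f - s) i ∂μ‖
        ≤ ‖φ (f - s)‖ + ‖∫ i, (f - s) i ∂μ‖ := norm_sub_le _ _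
      _ ≤ ‖φ‖ * (2 * ε) + 2 * ε := add_le_add hb1 hb2
      _ = (‖φ‖ + 1) * (2 * ε) := by ring
  have hpos : 0 < ‖φ‖ + 1 := by positivity
  have hz : ‖φ f - ∫ i, f i ∂μ‖ ≤ 0 := by
    refine le_of_forall_gt_imp_ge_of_dense fun a ha => ?_
    have hεpos : 0 < a / (2 * (‖φ‖ + 1)) := by positivity
    have := key _ hεpos
    calc ‖φ f - ∫ i, f i ∂μ‖ ≤ (‖φ‖ + 1) * (2 * (a / (2 * (‖φ‖ + 1)))) := this
      _ = a := by field_simp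
  have : φ f - ∫ i, f i ∂μ = 0 := by
    rwa [← norm_le_zero_iff]
  exact sub_eq_zero.mp this
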